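/- With R, G, π, φ as above and tr: R[G] → R[π_{φ'}] the trace map sending Σ r_g·g to Σ_{g∈π} r_g·[g]: for all a, b ∈ R[G], tr(a·b) = tr(φ(b)·a), where φ is extended R-linearly to R[G]. -/

import Mathlib

open scoped Classical

/-- Twisted conjugacy relation on `π`: `a ∼ b` iff `b = φ(γ) a γ⁻¹` for some `γ ∈ G`. -/
def twRel {G : Type} [Group G] (π : Subgroup G) (φ : G →* G) (a b : ↥π) : Prop :=
  ∃ γ : G, (b : G) = φ γ * ↑a * γ⁻¹

/-- The set of twisted conjugacy classes `π_{φ'}`. -/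
def TwCl {G : Type} [Group G] (π : Subgroup G) (φ : G →* G) := Quot (twRel π φ)

/-- The twisted trace `tr : R[G] → R[π_{φ'}]`, sending `Σ r_g·g` to `Σ_{g ∈ π} r_g·[g]`. -/
noncomputable def twTr (R : Type) {G : Type} [CommRing R] [Group G] (π : Subgroup G)
    (φ : G →* G) (a : MonoidAlgebra R G) : TwCl π φ →₀ R :=
  Finsupp.sum a.coeff fun g r =>
    if h : g ∈ π then Finsupp.single (Quot.mk (twRel π φ) ⟨g, h⟩) r else 0

/-- Linear-map version of `twTr`. -/
noncomputable def twTrL (R : Type) {G : Type} [CommRing R] [Group G] (π : Subgroup G)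
    (φ : G →* G) : MonoidAlgebra R G →ₗ[R] (TwCl π φ →₀ R) :=
  (Finsupp.lsum R fun g => if h : g ∈ π then Finsupp.lsingle (α := TwCl π φ) (Quot.mk (twRel π φ) ⟨g, h⟩) else 0 :
    (G →₀ R) →ₗ[R] (TwCl π φ →₀ R)) ∘ₗ
    (MonoidAlgebra.coeffLinearEquiv R).toLinearMap

lemma twTr_eq_twTrL (R : Type) {G : Type} [CommRing R] [Group G] (π : Subgroup G) (φ : G →* G)
    (a : MonoidAlgebra R G) : twTr R π φ a = twTrL R π φ a := by
  rw [twTr, twTrL]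
  simp only [LinearMap.comp_apply, LinearEquiv.coe_coe, MonoidAlgebra.coeffLinearEquiv_apply]
  erw [Finsupp.lsum_apply]
  refine Finsupp.sum_congr fun g _ => ?_
  split_ifs with h <;> rfl

lemma mem_key {G : Type} [Group G] (π : Subgroup G) [π.Normal] (φ : G →* G)
    (hquot : ∀ g : G, φ g * g⁻¹ ∈ π) (g h : G) : g * h ∈ π ↔ φ h * g ∈ π := by
  constructor
  · intro hm
    have h1 : h * g ∈ π := by
      have := Subgroup.Normal.conj_mem ‹π.Normal› _ hm h
      simpa [mul_assoc] using this
    have : (φ h * h⁻¹) * (h * g) ∈ π := π.mul_mem (hquot h) h1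
    simpa [mul_assoc] using this
  · intro hm
    have h1 : h * g ∈ π := by
      have := π.mul_mem (π.inv_mem (hquot h)) hm
      simpa [mul_assoc] using this
    have := Subgroup.Normal.conj_mem ‹π.Normal› _ h1 h⁻¹
    simpa [mul_assoc] using this

lemma twTrL_single_key (R : Type) {G : Type} [CommRing R] [Group G] (π : Subgroup G) [π.Normal]
    (φ : G →* G) (hquot : ∀ g : G, φ g * g⁻¹ ∈ π) (g h : G) (c : R) :
    twTrL R π φ (MonoidAlgebra.single (g * h) c) = twTrL R π φ (MonoidAlgebra.single (φ h * g) c) := by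
  rw [twTrL]
  simp only [LinearMap.comp_apply, LinearEquiv.coe_coe, MonoidAlgebra.coeffLinearEquiv_apply,
    MonoidAlgebra.coeff_single]
  erw [Finsupp.lsum_apply, Finsupp.lsum_apply]
  rw [Finsupp.sum_single_index, Finsupp.sum_single_index]
  · by_cases hm : g * h ∈ π
    · have hm' : φ h * g ∈ π := (mem_key π φ hquot g h).1 hm
      rw [dif_pos hm, dif_pos hm']
      change Finsupp.single (α := TwCl π φ) _ c = Finsupp.single (α := TwCl π φ) _ c
      congr 1
      apply Quot.sound
      exact ⟨h, by group⟩
    · have hm' : ¬ (φ h * g ∈ π) := fun hx => hm ((mem_key π φ hquot g h).2 hx)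
      rw [dif_neg hm, dif_neg hm']
  · split_ifs <;> simp
  · split_ifs <;> simp

/-- `tr(a·b) = tr(φ(b)·a)` for the twisted trace, `φ` extended `R`-linearly to `R[G]`. -/
theorem statement3 (R G : Type) [CommRing R] [Group G] (π : Subgroup G) [π.Normal]
    (φ : G →* G) (hres : ∀ g ∈ π, φ g ∈ π) (hquot : ∀ g : G, φ g * g⁻¹ ∈ π) :
    ∀ a b : MonoidAlgebra R G,
      twTr R π φ (a * b) = twTr R π φ (MonoidAlgebra.mapDomainRingHom R φ b * a) := by
  intro a b
  rw [twTr_eq_twTrL, twTr_eq_twTrL]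
  induction a using MonoidAlgebra.induction_linear with
  | zero => simp
  | add f g hf hg => simp [add_mul, mul_add, hf, hg]
  | single ga ra =>
    induction b using MonoidAlgebra.induction_linear with
    | zero => simp
    | add f g hf hg => simp [add_mul, mul_add, hf, hg, MonoidAlgebra.mapDomain_add]
    | single gb rb =>
      have h1 : (MonoidAlgebra.single ga ra * MonoidAlgebra.single gb rb : MonoidAlgebra R G) =
          MonoidAlgebra.single (ga * gb) (ra * rb) := MonoidAlgebra.single_mul_single _ _ _ _
      have h2 : (MonoidAlgebra.mapDomainRingHom R φ (MonoidAlgebra.single gb rb) *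
          MonoidAlgebra.single ga ra : MonoidAlgebra R G) =
          MonoidAlgebra.single (φ gb * ga) (rb * ra) := by
        have h3 : (MonoidAlgebra.mapDomainRingHom R φ (MonoidAlgebra.single gb rb) :
            MonoidAlgebra R G) = MonoidAlgebra.single (φ gb) rb := by
          simp [MonoidAlgebra.mapDomainRingHom_apply, MonoidAlgebra.mapDomain_single]
        rw [h3, MonoidAlgebra.single_mul_single]
      rw [h1, h2, mul_comm ra rb]
      exact twTrL_single_key R π φ hquot ga gb (rb * ra)
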